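/- Define the polynomials u_n(y) = Σ_{i≥1} a(n,i) y^i and v_n(y) = Σ_{i≥1} b(n,i) y^i in ℤ[y]. Then v_1(y) = 6y², and for all n ≥ 2, v_n(y) = 6y·u_{n-1}(y) + (3 + 2y + y²)·v_{n-1}(y). Equivalently, in terms of bivariate generating functions T_1(x,y) = Σ_{n≥1} u_n(y) x^n and T_2(x,y) = Σ_{n≥1} v_n(y) x^n, one has T_2 = 6xy² + 6xy·T_1 + 3x·T_2 + 2xy·T_2 + xy²·T_2. -/

import Mathlib

open SimpleGraph Polynomial

/-- A 2-colored partition of a simple graph `G`: a partition of the vertex set into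
nonempty parts, each inducing a connected subgraph, together with an assignment of one
of two colors to each part such that distinct parts joined by an edge get different colors. -/
structure TwoColoredPartition {V : Type*} (G : SimpleGraph V) where
  parts : Set (Set V)
  nonempty : ∀ p ∈ parts, p.Nonempty
  covers : ∀ v : V, ∃ p, p ∈ parts ∧ v ∈ p
  disj : ∀ p ∈ parts, ∀ q ∈ parts, p ≠ q → Disjoint p q
  conn : ∀ p ∈ parts, (G.induce p).Connected
  color : parts → Fin 2
  proper : ∀ p q : parts, p ≠ q →
    (∃ v ∈ (p : Set V), ∃ w ∈ (q : Set V), G.Adj v w) → color p ≠ color q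

/-- The size of a 2-colored partition: its number of parts. -/
noncomputable def TwoColoredPartition.size {V : Type*} {G : SimpleGraph V}
    (T : TwoColoredPartition G) : ℕ :=
  T.parts.ncard

/-- The color of a vertex in a 2-colored partition: the color of the part containing it. -/
noncomputable def TwoColoredPartition.vcolor {V : Type*} {G : SimpleGraph V}
    (T : TwoColoredPartition G) (v : V) : Fin 2 :=
  T.color ⟨(T.covers v).choose, (T.covers v).choose_spec.1⟩

/-- All three vertices of the last triangle of `K₃ × Pₙ` (those whose path coordinate is
the last vertex of the path) have the same color. -/
def sameColorLastTriangle {n : ℕ}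
    (T : TwoColoredPartition ((⊤ : SimpleGraph (Fin 3)) □ pathGraph n)) : Prop :=
  ∀ v w : Fin 3 × Fin n, (v.2 : ℕ) = n - 1 → (w.2 : ℕ) = n - 1 → T.vcolor v = T.vcolor w

/-- Both colors occur among the three vertices of the last triangle of `K₃ × Pₙ`. -/
def bothColorsLastTriangle {n : ℕ}
    (T : TwoColoredPartition ((⊤ : SimpleGraph (Fin 3)) □ pathGraph n)) : Prop :=
  ∃ v w : Fin 3 × Fin n, (v.2 : ℕ) = n - 1 ∧ (w.2 : ℕ) = n - 1 ∧ T.vcolor v ≠ T.vcolor w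

/-- `a n i`: the number of 2-colored partitions of `K₃ × Pₙ` of size `i` in which all three
vertices of the last triangle have the same color. -/
noncomputable def a (n i : ℕ) : ℕ :=
  Nat.card {T : TwoColoredPartition ((⊤ : SimpleGraph (Fin 3)) □ pathGraph n) //
    T.size = i ∧ sameColorLastTriangle T}

/-- `b n i`: the number of 2-colored partitions of `K₃ × Pₙ` of size `i` in which both colors
occur among the vertices of the last triangle. -/
noncomputable def b (n i : ℕ) : ℕ :=
  Nat.card {T : TwoColoredPartition ((⊤ : SimpleGraph (Fin 3)) □ pathGraph n) //
    T.size = i ∧ bothColorsLastTriangle T}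

/-- `uₙ(y) = ∑_{i ≥ 1} a(n,i) yⁱ ∈ ℤ[y]`. -/
noncomputable def upoly (n : ℕ) : Polynomial ℤ :=
  ∑ᶠ (i : ℕ) (_ : 1 ≤ i), Polynomial.monomial i (a n i : ℤ)

/-- `vₙ(y) = ∑_{i ≥ 1} b(n,i) yⁱ ∈ ℤ[y]`. -/
noncomputable def vpoly (n : ℕ) : Polynomial ℤ :=
  ∑ᶠ (i : ℕ) (_ : 1 ≤ i), Polynomial.monomial i (b n i : ℤ)

namespace TCP

variable {V : Type*} {G : SimpleGraph V}

def M (G : SimpleGraph V) (f : V → Fin 2) : SimpleGraph V where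
  Adj v w := G.Adj v w ∧ f v = f w
  symm := ⟨fun v w h => ⟨h.1.symm, h.2.symm⟩⟩
  loopless := ⟨fun v h => G.loopless.irrefl v h.1⟩

lemma M_adj {f : V → Fin 2} {v w : V} : (M G f).Adj v w ↔ G.Adj v w ∧ f v = f w := Iff.rfl

lemma f_eq_of_reachable {f : V → Fin 2} {v w : V} (h : (M G f).Reachable v w) :
    f v = f w := by
  obtain ⟨p⟩ := h
  induction p with
  | nil => rfl
  | cons h p ih => exact h.2.trans ih

def cpartOf (G : SimpleGraph V) (f : V → Fin 2) (v : V) : Set V :=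
  {w | (M G f).Reachable v w}

lemma mem_cpartOf {f : V → Fin 2} {v w : V} :
    w ∈ cpartOf G f v ↔ (M G f).Reachable v w := Iff.rfl

lemma mem_cpartOf_self {f : V → Fin 2} (v : V) : v ∈ cpartOf G f v := Reachable.refl v

lemma cpartOf_eq_of_reachable {f : V → Fin 2} {v w : V} (h : (M G f).Reachable v w) :
    cpartOf G f v = cpartOf G f w := by
  ext z; exact ⟨fun hz => h.symm.trans hz, fun hz => h.trans hz⟩

lemma cpartOf_eq_iff {f : V → Fin 2} {v w : V} :
    cpartOf G f v = cpartOf G f w ↔ (M G f).Reachable v w := by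
  refine ⟨fun h => ?_, cpartOf_eq_of_reachable⟩
  have : w ∈ cpartOf G f v := h ▸ mem_cpartOf_self w
  exact this

lemma f_const_on_cpartOf {f : V → Fin 2} {v w : V} (h : w ∈ cpartOf G f v) :
    f w = f v := (f_eq_of_reachable h).symm

def cparts (G : SimpleGraph V) (f : V → Fin 2) : Set (Set V) :=
  {S | ∃ v, S = cpartOf G f v}

lemma cpartOf_mem_cparts {f : V → Fin 2} (v : V) : cpartOf G f v ∈ cparts G f := ⟨v, rfl⟩

lemma reachable_induce_of_walk {f : V → Fin 2} {v : V} {x y : V}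
    (p : (M G f).Walk x y) (hx : x ∈ cpartOf G f v) :
    ∃ hy : y ∈ cpartOf G f v,
      (G.induce (cpartOf G f v)).Reachable ⟨x, hx⟩ ⟨y, hy⟩ := by
  induction p with
  | nil => exact ⟨hx, Reachable.refl _⟩
  | @cons a b c h q ih =>
      have hb : b ∈ cpartOf G f v := (mem_cpartOf.mp hx).trans ⟨h.toWalk⟩
      obtain ⟨hy, hr⟩ := ih hb
      refine ⟨hy, Reachable.trans ?_ hr⟩
      exact Adj.reachable (by simpa [comap_adj] using h.1)

lemma connected_induce_cpartOf {f : V → Fin 2} (v : V) :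
    (G.induce (cpartOf G f v)).Connected := by
  rw [connected_iff]
  refine ⟨fun x y => ?_, ⟨⟨v, mem_cpartOf_self v⟩⟩⟩
  obtain ⟨x, hx⟩ := x
  obtain ⟨y, hy⟩ := y
  obtain ⟨p⟩ : (M G f).Reachable x y := (mem_cpartOf.mp hx).symm.trans (mem_cpartOf.mp hy)
  obtain ⟨hy', hr⟩ := reachable_induce_of_walk p hx
  exact hr

/-- the 2-colored partition associated to a coloring -/
noncomputable def ofColoring (G : SimpleGraph V) (f : V → Fin 2) : TwoColoredPartition G where
  parts := cparts G f
  nonempty := by rintro p ⟨v, rfl⟩; exact ⟨v, mem_cpartOf_self v⟩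
  covers := fun v => ⟨cpartOf G f v, cpartOf_mem_cparts v, mem_cpartOf_self v⟩
  disj := by
    rintro p ⟨v, rfl⟩ q ⟨w, rfl⟩ hne
    rw [Set.disjoint_left]
    intro z hz hz'
    exact hne (cpartOf_eq_of_reachable ((mem_cpartOf.mp hz).trans (mem_cpartOf.mp hz').symm))
  conn := by rintro p ⟨v, rfl⟩; exact connected_induce_cpartOf v
  color := fun p => f p.2.choose
  proper := by
    rintro ⟨p, hp⟩ ⟨q, hq⟩ hne ⟨v, hv, w, hw, hadj⟩ hcol
    have hps := hp.choose_spec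
    have hqs := hq.choose_spec
    have hv' : v ∈ cpartOf G f (Exists.choose hp) := by rw [← hps]; exact hv
    have hw' : w ∈ cpartOf G f (Exists.choose hq) := by rw [← hqs]; exact hw
    have h1 : f v = f (Exists.choose hp) := f_const_on_cpartOf hv'
    have h2 : f w = f (Exists.choose hq) := f_const_on_cpartOf hw' 
    have hfv : f v = f w := by rw [h1, h2]; exact hcol
    have hreach : (M G f).Reachable v w := Adj.reachable ⟨hadj, hfv⟩
    have hpv : p = cpartOf G f v := by
      rw [hps]; exact cpartOf_eq_of_reachable (mem_cpartOf.mp hv')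
    have hqw : q = cpartOf G f w := by
      rw [hqs]; exact cpartOf_eq_of_reachable (mem_cpartOf.mp hw')
    exact hne (Subtype.ext (show p = q by rw [hpv, hqw]; exact cpartOf_eq_of_reachable hreach))

/-- coloring of the part containing `v` equals `f v` for `ofColoring` -/
lemma vcolor_ofColoring (G : SimpleGraph V) (f : V → Fin 2) :
    (ofColoring G f).vcolor = f := by
  funext v
  unfold TwoColoredPartition.vcolor
  set T := ofColoring G f with hT
  have hspec := (T.covers v).choose_spec
  set p := (T.covers v).choose with hp
  obtain ⟨hpmem, hvp⟩ := hspec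
  -- T.color ⟨p, hpmem⟩ = f hpmem.choose, and v ∈ p = cpartOf (hpmem.choose)
  show f (Exists.choose hpmem) = f v
  have := hpmem.choose_spec
  exact (f_const_on_cpartOf (this ▸ hvp)).symm

/-- vcolor of a member vertex equals the color of its part -/
lemma vcolor_eq_color {T : TwoColoredPartition G} {p : Set V} (hp : p ∈ T.parts) {v : V}
    (hv : v ∈ p) : T.vcolor v = T.color ⟨p, hp⟩ := by
  unfold TwoColoredPartition.vcolor
  obtain ⟨hqmem, hvq⟩ := (T.covers v).choose_spec
  congr 1
  by_contra hne
  have := T.disj _ hqmem _ hp (fun h => hne (by cases h; rfl)) 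
  exact (Set.disjoint_left.mp this hvq) hv

lemma vcolor_const_on_part {T : TwoColoredPartition G} {p : Set V} (hp : p ∈ T.parts)
    {v w : V} (hv : v ∈ p) (hw : w ∈ p) : T.vcolor v = T.vcolor w := by
  rw [vcolor_eq_color hp hv, vcolor_eq_color hp hw]

/-- each part of T is the cpart of each of its elements w.r.t. T.vcolor -/
lemma part_eq_cpartOf {T : TwoColoredPartition G} {p : Set V} (hp : p ∈ T.parts) {v : V}
    (hv : v ∈ p) : p = cpartOf G T.vcolor v := by
  set f := T.vcolor with hf
  apply Set.eq_of_subset_of_subset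
  · -- p ⊆ cpartOf: p induces connected subgraph, monochromatic
    intro w hw
    have hconn := T.conn p hp
    have hr : (G.induce p).Reachable ⟨v, hv⟩ ⟨w, hw⟩ := hconn.preconnected _ _
    rw [mem_cpartOf]
    have hmap : ∀ a b : p, (G.induce p).Adj a b → (M G f).Adj a.1 b.1 := by
      intro a b hab
      exact ⟨hab, vcolor_const_on_part hp a.2 b.2⟩
    exact Reachable.map ⟨Subtype.val, fun {a b} hab => hmap a b hab⟩ hr
  · -- cpartOf ⊆ p: closed under M-adjacency by properness
    intro w hw
    obtain ⟨q⟩ := mem_cpartOf.mp hw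
    clear hw
    induction q with
    | nil => exact hv
    | @cons a b c hab q ih =>
        apply ih
        obtain ⟨qb, hqb, hbq⟩ := T.covers b
        by_cases hpq : p = qb
        · exact hpq ▸ hbq
        · exfalso
          refine T.proper ⟨p, hp⟩ ⟨qb, hqb⟩ (fun h => hpq (by simpa using congrArg Subtype.val h))
            ⟨a, hv, b, hbq, hab.1⟩ ?_
          rw [← vcolor_eq_color hp hv, ← vcolor_eq_color hqb hbq]
          exact hab.2

lemma parts_eq_cparts (T : TwoColoredPartition G) : T.parts = cparts G T.vcolor := by
  apply Set.eq_of_subset_of_subset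
  · intro p hp
    obtain ⟨v, hv⟩ := T.nonempty p hp
    exact ⟨v, part_eq_cpartOf hp hv⟩
  · rintro S ⟨v, rfl⟩
    obtain ⟨p, hp, hv⟩ := T.covers v
    rw [← part_eq_cpartOf hp hv]
    exact hp

lemma tcp_ext {T T' : TwoColoredPartition G} (hparts : T.parts = T'.parts)
    (hcolor : ∀ (p : Set V) (hp : p ∈ T.parts) (hp' : p ∈ T'.parts),
      T.color ⟨p, hp⟩ = T'.color ⟨p, hp'⟩) : T = T' := by
  obtain ⟨parts, ne, cov, dj, cn, col, pr⟩ := T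
  obtain ⟨parts', ne', cov', dj', cn', col', pr'⟩ := T'
  dsimp at hparts
  subst hparts
  have : col = col' := funext fun p => hcolor p.1 p.2 p.2
  subst this
  rfl

lemma ofColoring_vcolor (T : TwoColoredPartition G) : ofColoring G T.vcolor = T := by
  apply tcp_ext
  · exact (parts_eq_cparts T).symm
  · intro p hp hp'
    -- color of ofColoring at p is T.vcolor of hp.choose, where hp : ∃ v, p = cpartOf ...
    show T.vcolor (Exists.choose hp) = T.color ⟨p, hp'⟩
    apply vcolor_eq_color hp'
    have h : p = cpartOf G T.vcolor (Exists.choose hp) := hp.choose_spec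
    have h2 : Exists.choose hp ∈ cpartOf G T.vcolor (Exists.choose hp) := mem_cpartOf_self _
    rwa [← h] at h2

/-- The fundamental equivalence: 2-colored partitions are exactly 2-colorings. -/
noncomputable def mainEquiv (G : SimpleGraph V) : TwoColoredPartition G ≃ (V → Fin 2) where
  toFun T := T.vcolor
  invFun f := ofColoring G f
  left_inv T := ofColoring_vcolor T
  right_inv f := vcolor_ofColoring G f

lemma size_eq (T : TwoColoredPartition G) : T.size = (cparts G T.vcolor).ncard := by
  unfold TwoColoredPartition.size
  rw [parts_eq_cparts T]

/-- number of monochromatic components of a coloring -/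
noncomputable def csize (G : SimpleGraph V) (f : V → Fin 2) : ℕ := (cparts G f).ncard

lemma size_mainEquiv_symm (f : V → Fin 2) : ((mainEquiv G).symm f).size = csize G f := by
  have := size_eq ((mainEquiv G).symm f)
  rwa [show ((mainEquiv G).symm f).vcolor = f from (mainEquiv G).right_inv f] at this

/-! ### The prism graph `K₃ □ Pₙ` -/

abbrev Gr (n : ℕ) : SimpleGraph (Fin 3 × Fin n) := (⊤ : SimpleGraph (Fin 3)) □ pathGraph n

lemma gr_adj {n} {x y : Fin 3 × Fin n} : (Gr n).Adj x y ↔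
    (x.1 ≠ y.1 ∧ (x.2:ℕ) = (y.2:ℕ)) ∨
      (x.1 = y.1 ∧ ((x.2:ℕ)+1 = (y.2:ℕ) ∨ (y.2:ℕ)+1 = (x.2:ℕ))) := by
  obtain ⟨a, b⟩ := x; obtain ⟨a', b'⟩ := y
  simp [boxProd_adj, pathGraph_adj, Fin.ext_iff]
  tauto

lemma adj_same_col {n} {i j : Fin 3} {c : Fin n} (h : i ≠ j) : (Gr n).Adj (i,c) (j,c) :=
  gr_adj.mpr (Or.inl ⟨h, rfl⟩)

variable {k : ℕ}

/-- embedding of the first `k+1` columns -/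
def emb (k : ℕ) : Fin 3 × Fin (k+1) → Fin 3 × Fin (k+2) := fun u => (u.1, u.2.castSucc)

/-- vertex in the previous-to-last column, in old coordinates -/
def pv (k : ℕ) (j : Fin 3) : Fin 3 × Fin (k+1) := (j, Fin.last k)

/-- vertex in the last column -/
def lv (k : ℕ) (i : Fin 3) : Fin 3 × Fin (k+2) := (i, Fin.last (k+1))

lemma emb_inj : Function.Injective (emb k) := by
  intro u w h
  simp only [emb, Prod.mk.injEq, Fin.castSucc_inj] at h
  exact Prod.ext h.1 h.2

lemma emb_ne_lv (u : Fin 3 × Fin (k+1)) (i : Fin 3) : emb k u ≠ lv k i := by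
  intro h
  have := congrArg (fun x => (x.2 : ℕ)) h
  simp only [emb, lv, Fin.coe_castSucc, Fin.val_last] at this
  have := u.2.isLt
  omega

lemma vertex_cases (x : Fin 3 × Fin (k+2)) : (∃ u, x = emb k u) ∨ (∃ i, x = lv k i) := by
  obtain ⟨i, c⟩ := x
  rcases c.eq_castSucc_or_eq_last with ⟨j, rfl⟩ | rfl
  · exact Or.inl ⟨(i, j), rfl⟩
  · exact Or.inr ⟨i, rfl⟩

lemma adj_emb {u w : Fin 3 × Fin (k+1)} :
    (Gr (k+2)).Adj (emb k u) (emb k w) ↔ (Gr (k+1)).Adj u w := by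
  rw [gr_adj, gr_adj]
  simp [emb]

lemma adj_emb_lv {u : Fin 3 × Fin (k+1)} {i : Fin 3} :
    (Gr (k+2)).Adj (emb k u) (lv k i) ↔ u = pv k i := by
  obtain ⟨a, b⟩ := u
  have hb := b.isLt
  simp only [gr_adj, emb, lv, pv, Prod.mk.injEq, Fin.coe_castSucc, Fin.val_last, Fin.ext_iff]
  constructor
  · rintro (⟨h1, h2⟩ | ⟨h1, h2⟩) <;> [omega; exact ⟨h1, by omega⟩]
  · rintro ⟨h1, h2⟩
    exact Or.inr ⟨h1, by omega⟩

lemma adj_lv_lv {i j : Fin 3} : (Gr (k+2)).Adj (lv k i) (lv k j) ↔ i ≠ j := by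
  simp [gr_adj, lv]

section Restrict

variable (f : Fin 3 × Fin (k+2) → Fin 2)

lemma reach_of_reach_old {u w : Fin 3 × Fin (k+1)}
    (h : (M (Gr (k+1)) (f ∘ emb k)).Reachable u w) :
    (M (Gr (k+2)) f).Reachable (emb k u) (emb k w) :=
  Reachable.map
    { toFun := emb k, map_rel' := fun {a b} hab => M_adj.mpr ⟨adj_emb.mpr (M_adj.mp hab).1, (M_adj.mp hab).2⟩ } h

lemma reach_restrict_aux : ∀ {x y} (p : (M (Gr (k+2)) f).Walk x y)
    {w : Fin 3 × Fin (k+1)}, y = emb k w →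
    (∀ u, x = emb k u → (M (Gr (k+1)) (f ∘ emb k)).Reachable u w) ∧
    (∀ i, x = lv k i → ∀ j, f (emb k (pv k j)) = f x →
      (M (Gr (k+1)) (f ∘ emb k)).Reachable (pv k j) w) := by
  intro x y p
  induction p with
  | @nil a =>
      intro w hw
      subst hw
      refine ⟨fun u hu => ?_, fun i hi => absurd hi (emb_ne_lv w i)⟩
      rw [emb_inj hu]
  | @cons a b c h q ih =>
      intro w hw
      have IH := ih hw
      constructor
      · rintro u rfl
        rcases vertex_cases b with ⟨u', rfl⟩ | ⟨i, rfl⟩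
        · have hadj : (M (Gr (k+1)) (f ∘ emb k)).Adj u u' := ⟨adj_emb.mp h.1, h.2⟩
          exact hadj.reachable.trans (IH.1 u' rfl)
        · have hu : u = pv k i := adj_emb_lv.mp h.1
          have hcol : f (emb k (pv k i)) = f (lv k i) := by rw [← hu]; exact h.2
          have := IH.2 i rfl i hcol
          rwa [← hu] at this
      · rintro i rfl j hj
        rcases vertex_cases b with ⟨u', rfl⟩ | ⟨i', rfl⟩
        · have hu' : u' = pv k i := adj_emb_lv.mp h.1.symm
          have hr : (M (Gr (k+1)) (f ∘ emb k)).Reachable u' w := IH.1 u' rfl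
          by_cases hji : j = i
          · subst hji
            rw [← hu'] at *
            exact hr
          · have hadj : (M (Gr (k+1)) (f ∘ emb k)).Adj (pv k j) (pv k i) := by
              refine ⟨adj_same_col hji, ?_⟩
              show f (emb k (pv k j)) = f (emb k (pv k i))
              rw [hj, h.2, hu']
            exact hadj.reachable.trans (hu' ▸ hr)
        · have hcol : f (lv k i) = f (lv k i') := h.2
          exact IH.2 i' rfl j (hj.trans hcol)

lemma reach_iff {u w : Fin 3 × Fin (k+1)} :
    (M (Gr (k+2)) f).Reachable (emb k u) (emb k w) ↔
      (M (Gr (k+1)) (f ∘ emb k)).Reachable u w := by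
  refine ⟨fun h => ?_, reach_of_reach_old f⟩
  obtain ⟨p⟩ := h
  exact (reach_restrict_aux f p rfl).1 u rfl

lemma preimage_cpartOf (u : Fin 3 × Fin (k+1)) :
    emb k ⁻¹' (cpartOf (Gr (k+2)) f (emb k u)) = cpartOf (Gr (k+1)) (f ∘ emb k) u := by
  ext z
  simp only [Set.mem_preimage, mem_cpartOf]
  exact reach_iff f

end Restrict

/-! ### counting the parts in the last column -/

/-- number of color classes `c` of the new column `t` that are nonempty and have
no vertical link to the previous column `s` -/
def NC (s t : Fin 3 → Fin 2) : ℕ :=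
  (Finset.univ.filter (fun c : Fin 2 => (∃ i, t i = c) ∧ ∀ i, t i = c → s i ≠ c)).card

section LastCol

variable (f : Fin 3 × Fin (k+2) → Fin 2)

/-- the subset of the last column of color `c` -/
def colSet (f : Fin 3 × Fin (k+2) → Fin 2) (c : Fin 2) : Set (Fin 3 × Fin (k+2)) :=
  {x | ∃ i, f (lv k i) = c ∧ x = lv k i}

/-- the set of "good" colors -/
def Cset (f : Fin 3 × Fin (k+2) → Fin 2) : Set (Fin 2) :=
  {c | (∃ i, f (lv k i) = c) ∧ ∀ i, f (lv k i) = c → f (emb k (pv k i)) ≠ c}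

lemma colSet_closed {c : Fin 2} (hc : c ∈ Cset f) {x y : Fin 3 × Fin (k+2)}
    (hx : x ∈ colSet f c) (h : (M (Gr (k+2)) f).Adj x y) : y ∈ colSet f c := by
  obtain ⟨i, hi, rfl⟩ := hx
  rcases vertex_cases y with ⟨u, rfl⟩ | ⟨i', rfl⟩
  · exfalso
    have hu : u = pv k i := adj_emb_lv.mp h.1.symm
    have : f (emb k (pv k i)) = c := by rw [← hu, ← h.2]; exact hi
    exact hc.2 i hi this
  · exact ⟨i', by rw [← h.2]; exact hi, rfl⟩

lemma cpartOf_lv_eq {c : Fin 2} (hc : c ∈ Cset f) {i : Fin 3} (hi : f (lv k i) = c) :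
    cpartOf (Gr (k+2)) f (lv k i) = colSet f c := by
  apply Set.eq_of_subset_of_subset
  · intro z hz
    obtain ⟨p⟩ := mem_cpartOf.mp hz
    clear hz
    have hstart : lv k i ∈ colSet f c := ⟨i, hi, rfl⟩
    -- induct along the walk
    revert hstart
    generalize hI : lv k i = x at p ⊢
    clear hI hi
    induction p with
    | nil => exact fun h => h
    | cons h q ihq => exact fun hx => ihq (colSet_closed f hc hx h)
  · rintro z ⟨j, hj, rfl⟩
    by_cases hij : i = j
    · subst hij; exact mem_cpartOf_self _
    · exact mem_cpartOf.mpr (Adj.reachable ⟨adj_lv_lv.mpr hij, by rw [hi, hj]⟩)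

/-- the parts of `f` contained in the last column -/
def Blast (f : Fin 3 × Fin (k+2) → Fin 2) : Set (Set (Fin 3 × Fin (k+2))) :=
  {S ∈ cparts (Gr (k+2)) f | ∀ z ∈ S, z.2 = Fin.last (k+1)}

lemma blast_eq : Blast f = colSet f '' Cset f := by
  apply Set.eq_of_subset_of_subset
  · rintro S ⟨⟨x, rfl⟩, hlast⟩
    have hx2 : x.2 = Fin.last (k+1) := hlast x (mem_cpartOf_self x)
    have hx : x = lv k x.1 := Prod.ext rfl hx2
    set c := f (lv k x.1) with hcdef
    have hcC : c ∈ Cset f := by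
      refine ⟨⟨x.1, rfl⟩, fun j hj hlink => ?_⟩
      -- lv j is in the part, hence emb (pv j) is in the part, contradiction
      have hadjj : (M (Gr (k+2)) f).Reachable (lv k x.1) (lv k j) := by
        by_cases hij : x.1 = j
        · subst hij; exact Reachable.refl _
        · exact Adj.reachable ⟨adj_lv_lv.mpr hij, by rw [hj]⟩
      have hadj2 : (M (Gr (k+2)) f).Adj (lv k j) (emb k (pv k j)) := by
        refine ⟨(adj_emb_lv.mpr rfl).symm, ?_⟩
        rw [hj, hlink]
      have hmem : emb k (pv k j) ∈ cpartOf (Gr (k+2)) f x := by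
        rw [mem_cpartOf, hx]
        exact hadjj.trans hadj2.reachable
      have := hlast _ hmem
      simp only [emb, Fin.ext_iff, Fin.coe_castSucc, Fin.val_last] at this
      have hlt := (pv k j).2.isLt
      omega
    refine ⟨c, hcC, ?_⟩
    rw [show cpartOf (Gr (k+2)) f x = cpartOf (Gr (k+2)) f (lv k x.1) by rw [← hx]]
    exact (cpartOf_lv_eq f hcC rfl).symm
  · rintro S ⟨c, hc, rfl⟩
    obtain ⟨i, hi⟩ := hc.1
    refine ⟨⟨lv k i, (cpartOf_lv_eq f hc hi).symm⟩, ?_⟩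
    rintro z ⟨j, hj, rfl⟩
    rfl

lemma colSet_injOn : Set.InjOn (colSet f) (Cset f) := by
  intro c hc c' hc' h
  obtain ⟨i, hi⟩ := hc.1
  have : lv k i ∈ colSet f c' := h ▸ ⟨i, hi, rfl⟩
  obtain ⟨j, hj, hij⟩ := this
  have : i = j := by
    have := congrArg Prod.fst hij
    simpa [lv] using this
  rw [← hi, this, hj]

lemma ncard_blast : (Blast f).ncard = NC (fun i => f (emb k (pv k i))) (fun i => f (lv k i)) := by
  rw [blast_eq, Set.ncard_image_of_injOn (colSet_injOn f)]
  have : Cset f = ↑(Finset.univ.filter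
      (fun c : Fin 2 => (∃ i, (fun i => f (lv k i)) i = c) ∧
        ∀ i, (fun i => f (lv k i)) i = c → (fun i => f (emb k (pv k i))) i ≠ c)) := by
    ext c
    simp [Cset]
  rw [this, Set.ncard_coe_finset]
  rfl

/-- the parts of `f` meeting the old columns -/
def Aold (f : Fin 3 × Fin (k+2) → Fin 2) : Set (Set (Fin 3 × Fin (k+2))) :=
  (fun u => cpartOf (Gr (k+2)) f (emb k u)) '' Set.univ

lemma cparts_eq_union : cparts (Gr (k+2)) f = Aold f ∪ Blast f := by
  apply Set.eq_of_subset_of_subset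
  · rintro S ⟨x, rfl⟩
    by_cases hold : ∃ u, emb k u ∈ cpartOf (Gr (k+2)) f x
    · obtain ⟨u, hu⟩ := hold
      left
      exact ⟨u, Set.mem_univ u, (cpartOf_eq_of_reachable (mem_cpartOf.mp hu)).symm⟩
    · right
      refine ⟨⟨x, rfl⟩, fun z hz => ?_⟩
      rcases vertex_cases z with ⟨u, rfl⟩ | ⟨i, rfl⟩
      · exact absurd ⟨u, hz⟩ hold
      · rfl
  · rintro S (⟨u, _, rfl⟩ | ⟨hS, _⟩)
    · exact ⟨emb k u, rfl⟩
    · exact hS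

lemma disjoint_AB : Disjoint (Aold f) (Blast f) := by
  rw [Set.disjoint_left]
  rintro S ⟨u, _, rfl⟩ ⟨_, hlast⟩
  have := hlast (emb k u) (mem_cpartOf_self _)
  simp only [emb, Fin.ext_iff, Fin.coe_castSucc, Fin.val_last] at this
  have := u.2.isLt
  omega

lemma ncard_Aold : (Aold f).ncard = csize (Gr (k+1)) (f ∘ emb k) := by
  have hbij : Set.BijOn (fun S => emb k ⁻¹' S) (Aold f) (cparts (Gr (k+1)) (f ∘ emb k)) := by
    refine ⟨?_, ?_, ?_⟩
    · rintro S ⟨u, _, rfl⟩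
      dsimp only
      rw [preimage_cpartOf]
      exact cpartOf_mem_cparts u
    · rintro S ⟨u, _, rfl⟩ S' ⟨u', _, rfl⟩ h
      dsimp only at h ⊢
      rw [preimage_cpartOf, preimage_cpartOf] at h
      exact cpartOf_eq_of_reachable (reach_iff f |>.mpr (cpartOf_eq_iff.mp h))
    · rintro T ⟨u, rfl⟩
      exact ⟨cpartOf (Gr (k+2)) f (emb k u), ⟨u, Set.mem_univ u, rfl⟩, preimage_cpartOf f u⟩
  rw [csize, ← hbij.image_eq, Set.ncard_image_of_injOn hbij.injOn]

/-- The key recursion for the number of monochromatic components. -/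
lemma csize_succ : csize (Gr (k+2)) f =
    csize (Gr (k+1)) (f ∘ emb k) +
      NC (fun i => f (emb k (pv k i))) (fun i => f (lv k i)) := by
  rw [csize, cparts_eq_union f,
    Set.ncard_union_eq (disjoint_AB f) (Set.toFinite _) (Set.toFinite _),
    ncard_Aold f, ncard_blast f]

end LastCol

/-! ### counting -/

def Cboth (n : ℕ) (f : Fin 3 × Fin n → Fin 2) : Prop :=
  ∃ v w : Fin 3 × Fin n, (v.2 : ℕ) = n - 1 ∧ (w.2 : ℕ) = n - 1 ∧ f v ≠ f w

def Csame (n : ℕ) (f : Fin 3 × Fin n → Fin 2) : Prop :=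
  ∀ v w : Fin 3 × Fin n, (v.2 : ℕ) = n - 1 → (w.2 : ℕ) = n - 1 → f v = f w

instance (n : ℕ) : DecidablePred (Cboth n) := fun _ => by unfold Cboth; infer_instance

instance (n : ℕ) : DecidablePred (Csame n) := fun _ => by unfold Csame; infer_instance

lemma b_card (n i : ℕ) :
    b n i = ((Finset.univ.filter (Cboth n)).filter
      (fun f => csize (Gr n) f = i)).card := by
  have e : {T : TwoColoredPartition (Gr n) // T.size = i ∧ bothColorsLastTriangle T} ≃
      {f : Fin 3 × Fin n → Fin 2 // Cboth n f ∧ csize (Gr n) f = i} :=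
    Equiv.subtypeEquiv (mainEquiv (Gr n)) (fun T => by
      constructor
      · rintro ⟨h1, h2⟩
        exact ⟨h2, (size_eq T).symm.trans h1⟩
      · rintro ⟨h2, h1⟩
        exact ⟨(size_eq T).trans h1, h2⟩)
  rw [show b n i = Nat.card {T : TwoColoredPartition (Gr n) //
        T.size = i ∧ bothColorsLastTriangle T} from rfl,
    Nat.card_congr e, Nat.card_eq_fintype_card, Fintype.card_subtype, Finset.filter_filter]

lemma a_card (n i : ℕ) :
    a n i = ((Finset.univ.filter (Csame n)).filter
      (fun f => csize (Gr n) f = i)).card := by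
  have e : {T : TwoColoredPartition (Gr n) // T.size = i ∧ sameColorLastTriangle T} ≃
      {f : Fin 3 × Fin n → Fin 2 // Csame n f ∧ csize (Gr n) f = i} :=
    Equiv.subtypeEquiv (mainEquiv (Gr n)) (fun T => by
      constructor
      · rintro ⟨h1, h2⟩
        exact ⟨h2, (size_eq T).symm.trans h1⟩
      · rintro ⟨h2, h1⟩
        exact ⟨(size_eq T).trans h1, h2⟩)
  rw [show a n i = Nat.card {T : TwoColoredPartition (Gr n) //
        T.size = i ∧ sameColorLastTriangle T} from rfl,
    Nat.card_congr e, Nat.card_eq_fintype_card, Fintype.card_subtype, Finset.filter_filter]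

lemma csize_pos {n : ℕ} (v : Fin 3 × Fin n) (f : Fin 3 × Fin n → Fin 2) :
    1 ≤ csize (Gr n) f :=
  (Set.ncard_pos (Set.toFinite _)).mpr ⟨_, cpartOf_mem_cparts v⟩

/-- generic bridge from a `card`-valued count to a polynomial sum -/
lemma poly_sum_bridge (n : ℕ) (P : (Fin 3 × Fin n → Fin 2) → Prop) [DecidablePred P]
    (cnt : ℕ → ℕ)
    (hcnt : ∀ i, cnt i = ((Finset.univ.filter P).filter
      (fun f => csize (Gr n) f = i)).card)
    (hP : ∀ f, P f → (Fin 3 × Fin n)) :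
    (∑ᶠ (i : ℕ) (_ : 1 ≤ i), Polynomial.monomial i (cnt i : ℤ)) =
      ∑ f ∈ Finset.univ.filter P, (Polynomial.X : Polynomial ℤ) ^ csize (Gr n) f := by
  classical
  set T := Finset.image (fun f => csize (Gr n) f) (Finset.univ.filter P) with hT
  have h1 : ∀ i : ℕ, (∑ᶠ (_ : 1 ≤ i), Polynomial.monomial i (cnt i : ℤ)) =
      if 1 ≤ i then Polynomial.monomial i ((cnt i : ℤ)) else 0 := fun i => finsum_eq_if
  rw [finsum_congr h1]
  have hsupp : (Function.support fun i =>
      if 1 ≤ i then Polynomial.monomial i ((cnt i : ℤ)) else 0) ⊆ ↑T := by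
    intro i hi
    simp only [Function.mem_support, ne_eq, ite_eq_right_iff, not_forall] at hi
    obtain ⟨hi1, hi2⟩ := hi
    have hcnt0 : cnt i ≠ 0 := by
      intro h
      apply hi2
      rw [h]
      simp
    rw [hcnt i] at hcnt0
    obtain ⟨f, hf⟩ := Finset.card_ne_zero.mp hcnt0
    rw [Finset.mem_filter] at hf
    exact Finset.mem_coe.mpr (Finset.mem_image.mpr ⟨f, hf.1, hf.2⟩)
  rw [finsum_eq_sum_of_support_subset _ hsupp]
  have hmem1 : ∀ i ∈ T, 1 ≤ i := by
    intro i hi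
    obtain ⟨f, hf, rfl⟩ := Finset.mem_image.mp hi
    exact csize_pos (hP f (Finset.mem_filter.mp hf).2) f
  calc ∑ i ∈ T, (if 1 ≤ i then Polynomial.monomial i ((cnt i : ℤ)) else 0)
      = ∑ i ∈ T, ∑ f ∈ (Finset.univ.filter P).filter (fun f => csize (Gr n) f = i),
          (Polynomial.X : Polynomial ℤ) ^ csize (Gr n) f := by
        refine Finset.sum_congr rfl (fun i hi => ?_)
        rw [if_pos (hmem1 i hi), hcnt i]
        rw [Finset.sum_congr rfl (fun f hf => by
          rw [(Finset.mem_filter.mp hf).2] :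
            ∀ f ∈ (Finset.univ.filter P).filter (fun f => csize (Gr n) f = i), _)]
        rw [Finset.sum_const, ← Nat.cast_smul_eq_nsmul ℤ, Polynomial.smul_X_eq_monomial]
    _ = ∑ f ∈ Finset.univ.filter P, (Polynomial.X : Polynomial ℤ) ^ csize (Gr n) f :=
        Finset.sum_fiberwise_of_maps_to (fun f hf => Finset.mem_image_of_mem _ hf) _

lemma vpoly_sum (n : ℕ) : vpoly n =
    ∑ f ∈ Finset.univ.filter (Cboth n), (Polynomial.X : Polynomial ℤ) ^ csize (Gr n) f := by
  rw [vpoly]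
  exact poly_sum_bridge n (Cboth n) (b n) (b_card n) (fun f hf => hf.choose)

lemma upoly_sum (n : ℕ) (hn : 0 < n) : upoly n =
    ∑ f ∈ Finset.univ.filter (Csame n), (Polynomial.X : Polynomial ℤ) ^ csize (Gr n) f := by
  rw [upoly]
  exact poly_sum_bridge n (Csame n) (a n) (a_card n) (fun _ _ => ((0 : Fin 3), ⟨0, hn⟩))

/-! ### finite checks -/

lemma NC_const : ∀ s t : Fin 3 → Fin 2, (∀ i j, s i = s j) → (∃ i j, t i ≠ t j) →
    NC s t = 1 := by decide

lemma card_noncon :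
    (Finset.univ.filter (fun t : Fin 3 → Fin 2 => ∃ i j, t i ≠ t j)).card = 6 := by decide

lemma NC_lt : ∀ s t : Fin 3 → Fin 2, NC s t < 3 := by decide

lemma cnt0 : ∀ s : Fin 3 → Fin 2, (∃ i j, s i ≠ s j) →
    (Finset.univ.filter (fun t : Fin 3 → Fin 2 => (∃ i j, t i ≠ t j) ∧ NC s t = 0)).card = 3 := by
  decide

lemma cnt1 : ∀ s : Fin 3 → Fin 2, (∃ i j, s i ≠ s j) →
    (Finset.univ.filter (fun t : Fin 3 → Fin 2 => (∃ i j, t i ≠ t j) ∧ NC s t = 1)).card = 2 := by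
  decide

lemma cnt2 : ∀ s : Fin 3 → Fin 2, (∃ i j, s i ≠ s j) →
    (Finset.univ.filter (fun t : Fin 3 → Fin 2 => (∃ i j, t i ≠ t j) ∧ NC s t = 2)).card = 1 := by
  decide

lemma sum_NC_const (s : Fin 3 → Fin 2) (hs : ∀ i j, s i = s j) :
    (∑ t ∈ Finset.univ.filter (fun t : Fin 3 → Fin 2 => ∃ i j, t i ≠ t j),
      (Polynomial.X : Polynomial ℤ) ^ NC s t) = 6 * Polynomial.X := by
  rw [Finset.sum_congr rfl (fun t ht =>
    by rw [NC_const s t hs (Finset.mem_filter.mp ht).2, pow_one])]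
  rw [Finset.sum_const, card_noncon, nsmul_eq_mul]
  norm_num

lemma sum_NC_noncon (s : Fin 3 → Fin 2) (hs : ∃ i j, s i ≠ s j) :
    (∑ t ∈ Finset.univ.filter (fun t : Fin 3 → Fin 2 => ∃ i j, t i ≠ t j),
      (Polynomial.X : Polynomial ℤ) ^ NC s t) = 3 + 2 * Polynomial.X + Polynomial.X ^ 2 := by
  rw [← Finset.sum_fiberwise_of_maps_to (g := fun t => NC s t) (t := Finset.range 3)
    (fun t _ => Finset.mem_range.mpr (NC_lt s t))
    (fun t => (Polynomial.X : Polynomial ℤ) ^ NC s t)]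
  have hinner : ∀ j ∈ Finset.range 3,
      (∑ t ∈ (Finset.univ.filter (fun t : Fin 3 → Fin 2 => ∃ i j, t i ≠ t j)).filter
        (fun t => NC s t = j), (Polynomial.X : Polynomial ℤ) ^ NC s t) =
      ((Finset.univ.filter (fun t : Fin 3 → Fin 2 => (∃ i j, t i ≠ t j) ∧ NC s t = j)).card : ℕ)
        • (Polynomial.X : Polynomial ℤ) ^ j := by
    intro j _
    rw [Finset.sum_congr rfl (fun t ht => by
      rw [(Finset.mem_filter.mp ht).2]), Finset.sum_const, Finset.filter_filter]
  rw [Finset.sum_congr rfl hinner]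
  rw [Finset.sum_range_succ, Finset.sum_range_succ, Finset.sum_range_one]
  rw [cnt0 s hs, cnt1 s hs, cnt2 s hs]
  simp only [nsmul_eq_mul, Nat.cast_ofNat, Nat.cast_one, pow_zero, pow_one]
  ring

/-! ### the splitting bijection -/

def glue (k : ℕ) (p : (Fin 3 × Fin (k+1) → Fin 2) × (Fin 3 → Fin 2)) :
    Fin 3 × Fin (k+2) → Fin 2 :=
  fun x => if h : x.2 = Fin.last (k+1) then p.2 x.1 else p.1 (x.1, x.2.castPred h)

lemma glue_emb (p : (Fin 3 × Fin (k+1) → Fin 2) × (Fin 3 → Fin 2)) (u : Fin 3 × Fin (k+1)) :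
    glue k p (emb k u) = p.1 u := by
  have h : (emb k u).2 ≠ Fin.last (k+1) := by
    intro hcon
    have h2 := congrArg Fin.val hcon
    simp only [emb, Fin.coe_castSucc, Fin.val_last] at h2
    have := u.2.isLt
    omega
  rw [glue, dif_neg h]
  congr 1

lemma glue_lv (p : (Fin 3 × Fin (k+1) → Fin 2) × (Fin 3 → Fin 2)) (i : Fin 3) :
    glue k p (lv k i) = p.2 i := dif_pos rfl

lemma glue_split (f : Fin 3 × Fin (k+2) → Fin 2) :
    glue k (f ∘ emb k, fun i => f (lv k i)) = f := by
  funext x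
  rcases vertex_cases x with ⟨u, rfl⟩ | ⟨i, rfl⟩
  · rw [glue_emb]; rfl
  · rw [glue_lv]

lemma Cboth_succ_iff (f : Fin 3 × Fin (k+2) → Fin 2) :
    Cboth (k+2) f ↔ ∃ i j, f (lv k i) ≠ f (lv k j) := by
  constructor
  · rintro ⟨v, w, hv, hw, hne⟩
    refine ⟨v.1, w.1, ?_⟩
    have hv' : v = lv k v.1 := Prod.ext rfl (Fin.ext (by simp only [lv, Fin.val_last]; omega))
    have hw' : w = lv k w.1 := Prod.ext rfl (Fin.ext (by simp only [lv, Fin.val_last]; omega))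
    rw [← hv', ← hw']
    exact hne
  · rintro ⟨i, j, hne⟩
    exact ⟨lv k i, lv k j, by simp [lv], by simp [lv], hne⟩

lemma Csame_old_iff (g : Fin 3 × Fin (k+1) → Fin 2) :
    Csame (k+1) g ↔ ∀ i j, g (pv k i) = g (pv k j) := by
  constructor
  · intro h i j
    exact h (pv k i) (pv k j) (by simp [pv]) (by simp [pv])
  · intro h v w hv hw
    have hv' : v = pv k v.1 := Prod.ext rfl (Fin.ext (by simp only [pv, Fin.val_last]; omega))
    have hw' : w = pv k w.1 := Prod.ext rfl (Fin.ext (by simp only [pv, Fin.val_last]; omega))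
    rw [hv', hw']
    exact h v.1 w.1

lemma not_Csame (n : ℕ) (f : Fin 3 × Fin n → Fin 2) : ¬ Csame n f ↔ Cboth n f := by
  unfold Csame Cboth
  push_neg
  rfl

/-! ### the recurrence -/

lemma vpoly_step (k : ℕ) : vpoly (k+2) =
    6 * Polynomial.X * upoly (k+1)
      + (3 + 2 * Polynomial.X + Polynomial.X ^ 2) * vpoly (k+1) := by
  rw [vpoly_sum (k+2), upoly_sum (k+1) (by omega), vpoly_sum (k+1)]
  have hreindex : (∑ f ∈ Finset.univ.filter (Cboth (k+2)),
        (Polynomial.X : Polynomial ℤ) ^ csize (Gr (k+2)) f)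
      = ∑ p ∈ Finset.univ.filter
          (fun p : (Fin 3 × Fin (k+1) → Fin 2) × (Fin 3 → Fin 2) => ∃ i j, p.2 i ≠ p.2 j),
          (Polynomial.X : Polynomial ℤ) ^
            (csize (Gr (k+1)) p.1 + NC (fun i => p.1 (pv k i)) p.2) := by
    refine Finset.sum_bij' (i := fun f _ => (f ∘ emb k, fun i => f (lv k i)))
      (j := fun p _ => glue k p) ?_ ?_ ?_ ?_ ?_
    · intro f hf
      rw [Finset.mem_filter] at hf ⊢
      exact ⟨Finset.mem_univ _, (Cboth_succ_iff f).mp hf.2⟩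
    · intro p hp
      rw [Finset.mem_filter] at hp ⊢
      refine ⟨Finset.mem_univ _, (Cboth_succ_iff _).mpr ?_⟩
      obtain ⟨i, j, hij⟩ := hp.2
      exact ⟨i, j, by rw [glue_lv, glue_lv]; exact hij⟩
    · intro f _
      exact glue_split f
    · intro p _
      refine Prod.ext (funext fun u => ?_) (funext fun i => ?_)
      · exact glue_emb p u
      · exact glue_lv p i
    · intro f _
      rw [csize_succ f]
      rfl
  rw [hreindex]
  have hprod : Finset.univ.filter
      (fun p : (Fin 3 × Fin (k+1) → Fin 2) × (Fin 3 → Fin 2) => ∃ i j, p.2 i ≠ p.2 j) =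
      (Finset.univ : Finset (Fin 3 × Fin (k+1) → Fin 2)) ×ˢ
        (Finset.univ.filter (fun t : Fin 3 → Fin 2 => ∃ i j, t i ≠ t j)) := by
    ext p
    simp [Finset.mem_product]
  rw [hprod, Finset.sum_product]
  have hstep : ∀ g : Fin 3 × Fin (k+1) → Fin 2,
      (∑ t ∈ Finset.univ.filter (fun t : Fin 3 → Fin 2 => ∃ i j, t i ≠ t j),
        (Polynomial.X : Polynomial ℤ) ^ (csize (Gr (k+1)) g + NC (fun i => g (pv k i)) t)) =
      (Polynomial.X : Polynomial ℤ) ^ csize (Gr (k+1)) g *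
        (if Csame (k+1) g then 6 * Polynomial.X
          else 3 + 2 * Polynomial.X + Polynomial.X ^ 2) := by
    intro g
    rw [Finset.sum_congr rfl (fun t _ => pow_add Polynomial.X (csize (Gr (k+1)) g) _),
      ← Finset.mul_sum]
    congr 1
    by_cases hg : Csame (k+1) g
    · rw [if_pos hg]
      exact sum_NC_const _ ((Csame_old_iff g).mp hg)
    · rw [if_neg hg]
      apply sum_NC_noncon
      obtain ⟨v, w, hv, hw, hne⟩ := (not_Csame _ g).mp hg
      have hv' : v = pv k v.1 := Prod.ext rfl (Fin.ext (by simp only [pv, Fin.val_last]; omega))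
      have hw' : w = pv k w.1 := Prod.ext rfl (Fin.ext (by simp only [pv, Fin.val_last]; omega))
      exact ⟨v.1, w.1, by rw [← hv', ← hw']; exact hne⟩
  rw [Finset.sum_congr rfl (fun g _ => hstep g)]
  rw [← Finset.sum_filter_add_sum_filter_not Finset.univ (Csame (k+1))]
  have h1 : (∑ g ∈ Finset.univ.filter (Csame (k+1)),
      (Polynomial.X : Polynomial ℤ) ^ csize (Gr (k+1)) g *
        (if Csame (k+1) g then 6 * Polynomial.X
          else 3 + 2 * Polynomial.X + Polynomial.X ^ 2)) =
      6 * Polynomial.X * ∑ g ∈ Finset.univ.filter (Csame (k+1)),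
        (Polynomial.X : Polynomial ℤ) ^ csize (Gr (k+1)) g := by
    rw [Finset.mul_sum]
    refine Finset.sum_congr rfl (fun g hg => ?_)
    rw [if_pos (Finset.mem_filter.mp hg).2, mul_comm]
  have h2 : (∑ g ∈ Finset.univ.filter (fun g => ¬ Csame (k+1) g),
      (Polynomial.X : Polynomial ℤ) ^ csize (Gr (k+1)) g *
        (if Csame (k+1) g then 6 * Polynomial.X
          else 3 + 2 * Polynomial.X + Polynomial.X ^ 2)) =
      (3 + 2 * Polynomial.X + Polynomial.X ^ 2) * ∑ g ∈ Finset.univ.filter (Cboth (k+1)),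
        (Polynomial.X : Polynomial ℤ) ^ csize (Gr (k+1)) g := by
    rw [show Finset.univ.filter (fun g => ¬ Csame (k+1) g) =
        Finset.univ.filter (Cboth (k+1)) from
      Finset.filter_congr (fun g _ => not_Csame (k+1) g)]
    rw [Finset.mul_sum]
    refine Finset.sum_congr rfl (fun g hg => ?_)
    rw [if_neg ((not_Csame (k+1) g).mpr (Finset.mem_filter.mp hg).2), mul_comm]
  rw [h1, h2]

/-! ### base case -/

lemma cpartOf_one (f : Fin 3 × Fin 1 → Fin 2) (x : Fin 3 × Fin 1) :
    cpartOf (Gr 1) f x = {z | f z = f x} := by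
  apply Set.eq_of_subset_of_subset
  · intro z hz
    exact (f_eq_of_reachable (mem_cpartOf.mp hz)).symm
  · intro z hz
    by_cases hzx : z = x
    · subst hzx; exact mem_cpartOf_self z
    · have h2 : z.2 = x.2 := Subsingleton.elim _ _
      have h1 : x.1 ≠ z.1 := by
        intro h
        exact hzx (Prod.ext h.symm h2)
      refine mem_cpartOf.mpr (Adj.reachable ⟨?_, hz.symm⟩)
      rw [gr_adj]
      exact Or.inl ⟨h1, by rw [h2]⟩

lemma csize_one (f : Fin 3 × Fin 1 → Fin 2) (hf : ∃ v w, f v ≠ f w) :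
    csize (Gr 1) f = 2 := by
  obtain ⟨v, w, hvw⟩ := hf
  have hv0 : ∃ v0, f v0 = 0 := by
    rcases Fin.exists_fin_two.mp ⟨f v, rfl⟩ with h | h
    · exact ⟨v, h⟩
    · refine ⟨w, ?_⟩
      rcases Fin.exists_fin_two.mp ⟨f w, rfl⟩ with h' | h'
      · exact h'
      · exact absurd (h.trans h'.symm) hvw
  have hv1 : ∃ v1, f v1 = 1 := by
    rcases Fin.exists_fin_two.mp ⟨f v, rfl⟩ with h | h
    · refine ⟨w, ?_⟩
      rcases Fin.exists_fin_two.mp ⟨f w, rfl⟩ with h' | h'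
      · exact absurd (h.trans h'.symm) hvw
      · exact h'
    · exact ⟨v, h⟩
  obtain ⟨v0, h0⟩ := hv0
  obtain ⟨v1, h1⟩ := hv1
  have hparts : cparts (Gr 1) f = {{z | f z = 0}, {z | f z = 1}} := by
    apply Set.eq_of_subset_of_subset
    · rintro S ⟨x, rfl⟩
      rw [cpartOf_one]
      rcases Fin.exists_fin_two.mp ⟨f x, rfl⟩ with h | h
      · rw [h]; exact Or.inl rfl
      · rw [h]; exact Or.inr rfl
    · rintro S (rfl | rfl)
      · exact ⟨v0, by rw [cpartOf_one, h0]⟩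
      · exact ⟨v1, by rw [cpartOf_one, h1]⟩
  rw [csize, hparts]
  apply Set.ncard_pair
  intro hcon
  have : v0 ∈ {z | f z = (1 : Fin 2)} := hcon ▸ h0
  rw [Set.mem_setOf_eq, h0] at this
  exact absurd this (by decide)

lemma Cboth_one_iff (f : Fin 3 × Fin 1 → Fin 2) : Cboth 1 f ↔ ∃ v w, f v ≠ f w := by
  constructor
  · rintro ⟨v, w, _, _, h⟩; exact ⟨v, w, h⟩
  · rintro ⟨v, w, h⟩
    exact ⟨v, w, by simp [Fin.ext_iff], by simp [Fin.ext_iff], h⟩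

lemma card_Cboth_one : (Finset.univ.filter (Cboth 1)).card = 6 := by decide

lemma vpoly_one : vpoly 1 = 6 * Polynomial.X ^ 2 := by
  rw [vpoly_sum 1]
  rw [Finset.sum_congr rfl (fun f hf => by
    rw [csize_one f ((Cboth_one_iff f).mp (Finset.mem_filter.mp hf).2)])]
  rw [Finset.sum_const, card_Cboth_one, nsmul_eq_mul]
  norm_num

end TCP

/-- `v₁(y) = 6y²`, and for all `n ≥ 2`, `vₙ(y) = 6y·u_{n-1}(y) + (3 + 2y + y²)·v_{n-1}(y)`.
Equivalently, `T₂ = 6xy² + 6xy·T₁ + 3x·T₂ + 2xy·T₂ + xy²·T₂` for the corresponding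
bivariate generating functions. -/
theorem vpoly_recurrence :
    vpoly 1 = 6 * Polynomial.X ^ 2 ∧
    ∀ n : ℕ, 2 ≤ n →
      vpoly n = 6 * Polynomial.X * upoly (n - 1)
        + (3 + 2 * Polynomial.X + Polynomial.X ^ 2) * vpoly (n - 1) := by
  refine ⟨TCP.vpoly_one, fun n hn => ?_⟩
  obtain ⟨k, rfl⟩ : ∃ k, n = k + 2 := ⟨n - 2, by omega⟩
  have h : k + 2 - 1 = k + 1 := by omega
  rw [h]
  exact TCP.vpoly_step k
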